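/- Let G and H be connected weighted graphs on the same vertex set of size n ≥ 2, with Laplacians L_G and L_H satisfying L_H ⪯ L_G. Then, writing σ = st_H(G) = Tr(L_H⁺ L_G), the pseudo-log-determinants satisfy: ld(L_H) + log(σ − n + 2) ≤ ld(L_G) ≤ ld(L_H) + (n−1)·log( σ/(n−1) ). Moreover both inequalities are equalities when H = G. -/

import Mathlib

open Matrix

/-- The four Penrose conditions characterizing the Moore–Penrose pseudoinverse `P` of a real
matrix `A`. -/
def IsMoorePenrose {ι : Type*} [Fintype ι] (A P : Matrix ι ι ℝ) : Prop :=
  A * P * A = A ∧ P * A * P = P ∧ (A * P)ᵀ = A * P ∧ (P * A)ᵀ = P * A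

/-- The Laplacian of a connected weighted graph: symmetric, nonpositive off-diagonal entries,
zero row sums, and kernel spanned by the all-ones vector. -/
def IsConnLaplacian {ι : Type*} [Fintype ι] (M : Matrix ι ι ℝ) : Prop :=
  M.IsSymm ∧ (∀ i j, i ≠ j → M i j ≤ 0) ∧ (∀ i, ∑ j, M i j = 0) ∧
    ∀ x : ι → ℝ, M.mulVec x = 0 ↔ ∃ c : ℝ, x = fun _ => c

/-- Pseudo-log-determinant: the sum of the logarithms of the positive eigenvalues
(roots of the characteristic polynomial, with multiplicity). -/
noncomputable def pld {ι : Type*} [Fintype ι] [DecidableEq ι] (M : Matrix ι ι ℝ) : ℝ :=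
  ((M.charpoly.roots.filter (fun r => 0 < r)).map Real.log).sum

open Polynomial

namespace StretchAux

variable {n : ℕ}

/-- all-ones matrix -/
def Jm (n : ℕ) : Matrix (Fin n) (Fin n) ℝ := Matrix.of fun _ _ => 1

variable {n : ℕ}

lemma Jm_transpose : (Jm n)ᵀ = Jm n := rfl

lemma Jm_mulVec (x : Fin n → ℝ) : Jm n *ᵥ x = fun _ => ∑ k, x k := by
  ext i; simp [Jm, mulVec, dotProduct]

lemma Jm_mul_Jm : Jm n * Jm n = (n : ℝ) • Jm n := by
  ext i j; simp [Jm, Matrix.mul_apply]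

lemma mul_Jm_eq_zero {M : Matrix (Fin n) (Fin n) ℝ} (h : ∀ i, ∑ j, M i j = 0) :
    M * Jm n = 0 := by
  ext i j
  simp [Jm, Matrix.mul_apply, h i]

lemma Jm_mul_eq_zero {M : Matrix (Fin n) (Fin n) ℝ} (hs : M.IsSymm)
    (h : ∀ i, ∑ j, M i j = 0) : Jm n * M = 0 := by
  ext i j
  simp only [Jm, Matrix.mul_apply, Matrix.of_apply, one_mul, Matrix.zero_apply]
  calc ∑ k, M k j = ∑ k, M j k := Finset.sum_congr rfl fun k _ => hs.apply k j ▸ (hs.apply j k).symm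
  _ = 0 := h j

lemma lap_mulVec_one {M : Matrix (Fin n) (Fin n) ℝ} (h : ∀ i, ∑ j, M i j = 0) :
    M *ᵥ (fun _ => (1:ℝ)) = 0 := by
  ext i; simp [mulVec, dotProduct, h i]

lemma lap_hermitian {M : Matrix (Fin n) (Fin n) ℝ} (hs : M.IsSymm) : M.IsHermitian := by
  rwa [Matrix.IsHermitian, conjTranspose_eq_transpose_of_trivial]

/-- Laplacians are positive semidefinite. -/
lemma lap_psd {M : Matrix (Fin n) (Fin n) ℝ} (hM : IsConnLaplacian M) : M.PosSemidef := by
  obtain ⟨hs, hoff, hrow, -⟩ := hM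
  refine PosSemidef.of_dotProduct_mulVec_nonneg (lap_hermitian hs) fun x => ?_
  have hcol : ∀ j, ∑ i, M i j = 0 := fun j => by
    calc ∑ i, M i j = ∑ i, M j i := Finset.sum_congr rfl fun i _ => hs.apply i j ▸ (hs.apply j i).symm
    _ = 0 := hrow j
  have key : star x ⬝ᵥ (M *ᵥ x) = (∑ i, ∑ j, (-(M i j)) * (x i - x j)^2) / 2 := by
    have expand : ∀ i j, (-(M i j)) * (x i - x j)^2
        = 2 * (M i j * x j * x i) - M i j * x i ^ 2 - M i j * x j ^ 2 := by
      intro i j; ring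
    have e1 : ∑ i, ∑ j, M i j * x i ^ 2 = 0 := by
      refine Finset.sum_eq_zero fun i _ => ?_
      rw [← Finset.sum_mul, hrow i, zero_mul]
    have e2 : ∑ i, ∑ j, M i j * x j ^ 2 = 0 := by
      rw [Finset.sum_comm]
      refine Finset.sum_eq_zero fun j _ => ?_
      rw [← Finset.sum_mul, hcol j, zero_mul]
    have e3 : star x ⬝ᵥ (M *ᵥ x) = ∑ i, ∑ j, M i j * x j * x i := by
      simp only [dotProduct, mulVec, star_trivial, Finset.mul_sum, dotProduct]
      exact Finset.sum_congr rfl fun i _ => Finset.sum_congr rfl fun j _ => by ring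
    simp only [expand, Finset.sum_sub_distrib, e1, e2, sub_zero, ← Finset.mul_sum, e3]
    ring
  rw [key]
  apply div_nonneg _ (by norm_num)
  refine Finset.sum_nonneg fun i _ => Finset.sum_nonneg fun j _ => ?_
  rcases eq_or_ne i j with rfl | hij
  · simp
  · exact mul_nonneg (neg_nonneg.2 (hoff i j hij)) (sq_nonneg _)


variable {L P : Matrix (Fin n) (Fin n) ℝ}

/-- `P *ᵥ 1 = 0` for the pseudoinverse of a Laplacian. -/
lemma pinv_mulVec_one (hL : IsConnLaplacian L) (hP : IsMoorePenrose L P) :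
    P *ᵥ (fun _ => (1:ℝ)) = 0 := by
  have h1 : (L * P) *ᵥ (fun _ => (1:ℝ)) = 0 := by
    rw [← hP.2.2.1, transpose_mul, ← Matrix.mulVec_mulVec, hL.1,
      lap_mulVec_one hL.2.2.1, Matrix.mulVec_zero]
  calc P *ᵥ (fun _ => (1:ℝ)) = (P * (L * P)) *ᵥ (fun _ => (1:ℝ)) := by
        rw [← Matrix.mul_assoc, hP.2.1]
  _ = 0 := by rw [← Matrix.mulVec_mulVec, h1, Matrix.mulVec_zero]

lemma pinv_mul_Jm (hL : IsConnLaplacian L) (hP : IsMoorePenrose L P) :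
    P * Jm n = 0 := by
  ext i j
  have := congrFun (pinv_mulVec_one hL hP) i
  simpa [Jm, Matrix.mul_apply, mulVec, dotProduct] using this

lemma Jm_mul_pinv (hL : IsConnLaplacian L) (hP : IsMoorePenrose L P) :
    Jm n * P = 0 := by
  have h1 : (P * L) *ᵥ (fun _ => (1:ℝ)) = 0 := by
    rw [← Matrix.mulVec_mulVec, lap_mulVec_one hL.2.2.1, Matrix.mulVec_zero]
  have h2 : P ᵀ *ᵥ (fun _ => (1:ℝ)) = 0 := by
    have : (P * L * P)ᵀ *ᵥ (fun _ => (1:ℝ)) = 0 := by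
      rw [transpose_mul, ← Matrix.mulVec_mulVec, hP.2.2.2, h1, Matrix.mulVec_zero]
    rwa [hP.2.1] at this
  ext i j
  have := congrFun h2 j
  simpa [Jm, Matrix.mul_apply, mulVec, dotProduct, transpose_apply,
    Finset.sum_comm] using this

/-- Key identity: `L * P = 1 - n⁻¹ • J`. -/
lemma lap_mul_pinv (hn : 0 < n) (hL : IsConnLaplacian L) (hP : IsMoorePenrose L P) :
    L * P = 1 - (n:ℝ)⁻¹ • Jm n := by
  set D : Matrix (Fin n) (Fin n) ℝ := 1 - (n:ℝ)⁻¹ • Jm n - L * P with hD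
  have hDsymm : Dᵀ = D := by
    rw [hD, transpose_sub, transpose_sub, transpose_smul, transpose_one, Jm_transpose, hP.2.2.1]
  have hDL : D * L = 0 := by
    rw [hD, Matrix.sub_mul, Matrix.sub_mul, Matrix.one_mul, smul_mul_assoc,
      Jm_mul_eq_zero hL.1 hL.2.2.1, Matrix.mul_assoc, ← Matrix.mul_assoc, hP.1]
    simp
  have hLD : L * D = 0 := by
    have : (L * D)ᵀ = 0 := by
      rw [transpose_mul, hDsymm, hL.1, hDL]
    calc L * D = ((L * D)ᵀ)ᵀ := by rw [transpose_transpose]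
    _ = 0 := by rw [this]; simp
  have hcol : ∀ j, ∃ c : ℝ, (fun i => D i j) = fun _ => c := by
    intro j
    refine (hL.2.2.2 _).mp ?_
    ext i
    have := congrFun (congrFun hLD i) j
    simpa [mulVec, dotProduct, Matrix.mul_apply] using this
  choose c hc using hcol
  have hDij : ∀ i j, D i j = c j := fun i j => congrFun (hc j) i
  have hD1 : D *ᵥ (fun _ => (1:ℝ)) = 0 := by
    have hLP1 : (L * P) *ᵥ (fun _ => (1:ℝ)) = 0 := by
      rw [← hP.2.2.1, transpose_mul, ← Matrix.mulVec_mulVec, hL.1,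
        lap_mulVec_one hL.2.2.1, Matrix.mulVec_zero]
    rw [hD, Matrix.sub_mulVec, Matrix.sub_mulVec, hLP1, Matrix.smul_mulVec, Jm_mulVec]
    ext i
    simp only [Matrix.one_mulVec, sub_zero, Pi.sub_apply, Pi.smul_apply, Pi.zero_apply]
    field_simp
    rw [Finset.sum_const, Finset.card_univ, Fintype.card_fin, nsmul_eq_mul, mul_one, smul_eq_mul,
      one_div, inv_mul_cancel₀ (Nat.cast_ne_zero.mpr hn.ne'), sub_self]
  have hsum : ∑ j, c j = 0 := by
    have := congrFun hD1 ⟨0, hn⟩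
    simpa [mulVec, dotProduct, hDij] using this
  have hconst : ∀ j j' : Fin n, c j = c j' := by
    intro j j'
    have h1 : D j' j = c j := hDij j' j
    have h2 : D j j' = c j' := hDij j j'
    have h3 : D j' j = D j j' := by
      have := congrFun (congrFun hDsymm j') j
      simpa [transpose_apply] using this.symm
    rw [h1, h2] at h3; exact h3
  have hc0 : ∀ j, c j = 0 := by
    intro j
    have : ∑ j', c j' = ∑ _j' : Fin n, c j := Finset.sum_congr rfl fun j' _ => hconst j' j
    rw [hsum] at this
    simp only [Finset.sum_const, Finset.card_univ, Fintype.card_fin, nsmul_eq_mul] at this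
    have hn' : (n:ℝ) ≠ 0 := Nat.cast_ne_zero.mpr hn.ne'
    have hn' : (n:ℝ) ≠ 0 := Nat.cast_ne_zero.mpr hn.ne'
    field_simp at this
    exact (mul_eq_zero.mp this.symm).resolve_left hn'
  have : D = 0 := by
    ext i j; rw [hDij i j, hc0 j]; rfl
  have h0 : 1 - (n:ℝ)⁻¹ • Jm n - L * P = 0 := hD ▸ this
  exact (sub_eq_zero.mp h0).symm


/-- matrix whose columns are the given orthonormal basis vectors -/
noncomputable def bmat (b : OrthonormalBasis (Fin n) ℝ (EuclideanSpace ℝ (Fin n))) :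
    Matrix (Fin n) (Fin n) ℝ := Matrix.of fun j i => b i j

lemma bmat_orth (b : OrthonormalBasis (Fin n) ℝ (EuclideanSpace ℝ (Fin n))) :
    (bmat b)ᵀ * bmat b = 1 := by
  ext i k
  have := orthonormal_iff_ite.mp b.orthonormal i k
  simp only [PiLp.inner_apply, RCLike.inner_apply, conj_trivial] at this
  simp only [Matrix.mul_apply, bmat, transpose_apply, Matrix.of_apply, Matrix.one_apply]
  rw [← this]
  exact Finset.sum_congr rfl fun _ _ => mul_comm _ _

lemma eigen_facts (M : Matrix (Fin n) (Fin n) ℝ)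
    (b : OrthonormalBasis (Fin n) ℝ (EuclideanSpace ℝ (Fin n))) (ν : Fin n → ℝ)
    (h : ∀ i, M *ᵥ ⇑(b i) = ν i • ⇑(b i)) :
    M.det = ∏ i, ν i ∧ M.trace = ∑ i, ν i ∧ M.charpoly = ∏ i, (X - C (ν i)) := by
  set B := bmat b with hB
  have hBtB : Bᵀ * B = 1 := bmat_orth b
  have hBBt : B * Bᵀ = 1 := mul_eq_one_comm.mp hBtB
  have hMB : M * B = B * Matrix.diagonal ν := by
    ext j i
    have hji := congrFun (h i) j
    simp only [mulVec, dotProduct, Pi.smul_apply, smul_eq_mul] at hji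
    simp only [Matrix.mul_apply, hB, bmat, Matrix.of_apply, Matrix.diagonal,
      Matrix.mul_apply]
    have hrhs : ∑ x, b x j * (if x = i then ν x else 0) = b i j * ν i := by
      rw [Finset.sum_eq_single i]
      · simp
      · intro c _ hc; simp [hc]
      · simp
    rw [hrhs]
    have hji' : (∑ x, M j x * b i x) = ν i * b i j := hji
    rw [hji']; ring
  have hM : M = B * Matrix.diagonal ν * Bᵀ := by
    calc M = M * (B * Bᵀ) := by rw [hBBt, Matrix.mul_one]
    _ = (M * B) * Bᵀ := by rw [Matrix.mul_assoc]
    _ = B * Matrix.diagonal ν * Bᵀ := by rw [hMB]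
  have hdetB : B.det * Bᵀ.det = 1 := by rw [← Matrix.det_mul, hBBt, Matrix.det_one]
  refine ⟨?_, ?_, ?_⟩
  · rw [hM, Matrix.det_mul, Matrix.det_mul, Matrix.det_diagonal]
    rw [mul_right_comm, hdetB, one_mul]
  · rw [hM, Matrix.trace_mul_comm, ← Matrix.mul_assoc, hBtB, Matrix.one_mul,
      Matrix.trace_diagonal]
  · rw [Matrix.charpoly, charmatrix, hM]
    have hmm : (C : ℝ →+* ℝ[X]).mapMatrix (B * Matrix.diagonal ν * Bᵀ)
        = (C : ℝ →+* ℝ[X]).mapMatrix B * (C : ℝ →+* ℝ[X]).mapMatrix (Matrix.diagonal ν)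
          * (C : ℝ →+* ℝ[X]).mapMatrix Bᵀ := by
      rw [_root_.map_mul, _root_.map_mul]
    set mB := (C : ℝ →+* ℝ[X]).mapMatrix B
    set mBt := (C : ℝ →+* ℝ[X]).mapMatrix Bᵀ
    have hmBBt : mB * mBt = 1 := by
      rw [← _root_.map_mul, hBBt, _root_.map_one]
    have hsc : ∀ N : Matrix (Fin n) (Fin n) ℝ[X],
        Matrix.scalar (Fin n) (X : ℝ[X]) * N = N * Matrix.scalar (Fin n) (X : ℝ[X]) :=
      fun N => (Matrix.scalar_commute (X : ℝ[X]) (fun r' => Commute.all _ _) N)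
    have key : Matrix.scalar (Fin n) (X : ℝ[X]) - (C : ℝ →+* ℝ[X]).mapMatrix
          (B * Matrix.diagonal ν * Bᵀ)
        = mB * (Matrix.scalar (Fin n) (X : ℝ[X])
            - (C : ℝ →+* ℝ[X]).mapMatrix (Matrix.diagonal ν)) * mBt := by
      rw [hmm, Matrix.mul_sub, Matrix.sub_mul]
      congr 1
      rw [← hsc mB, Matrix.mul_assoc, hmBBt, Matrix.mul_one]
    rw [key, Matrix.det_mul, Matrix.det_mul]
    have hdet1 : mB.det * mBt.det = 1 := by
      rw [← Matrix.det_mul, hmBBt, Matrix.det_one]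
    have hdiag : Matrix.scalar (Fin n) (X : ℝ[X])
        - (C : ℝ →+* ℝ[X]).mapMatrix (Matrix.diagonal ν)
        = Matrix.diagonal (fun i => (X : ℝ[X]) - C (ν i)) := by
      rw [Matrix.scalar_apply, RingHom.mapMatrix_apply, Matrix.diagonal_map (map_zero _),
        Matrix.diagonal_sub]
    rw [hdiag, Matrix.det_diagonal]
    rw [mul_right_comm, hdet1, one_mul]

lemma pld_of_charpoly (M : Matrix (Fin n) (Fin n) ℝ) (ν : Fin n → ℝ)
    (h : M.charpoly = ∏ i, (X - C (ν i))) :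
    pld M = ∑ i ∈ Finset.univ.filter (fun i => 0 < ν i), Real.log (ν i) := by
  have hroots : M.charpoly.roots = Finset.univ.val.map ν := by
    rw [h]
    have h2 : ∏ i, ((X : ℝ[X]) - C (ν i))
        = ((Finset.univ.val.map ν).map fun a => (X : ℝ[X]) - C a).prod := by
      rw [Multiset.map_map]; rfl
    rw [h2, Polynomial.roots_multiset_prod_X_sub_C]
  rw [pld, hroots, Multiset.filter_map, Multiset.map_map]
  rfl


lemma Jm_smul_psd (n : ℕ) : ((n:ℝ)⁻¹ • Jm n).PosSemidef := by
  refine PosSemidef.of_dotProduct_mulVec_nonneg ?_ ?_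
  · show _ᴴ = _
    rw [conjTranspose_eq_transpose_of_trivial, transpose_smul]
    congr 1
  · intro x
    have hmv : ((n:ℝ)⁻¹ • Jm n) *ᵥ x = fun _ => (n:ℝ)⁻¹ * ∑ k, x k := by
      rw [Matrix.smul_mulVec, Jm_mulVec]; ext j; simp
    rw [hmv]
    have : star x ⬝ᵥ (fun _ => (n:ℝ)⁻¹ * ∑ k, x k) = (n:ℝ)⁻¹ * (∑ k, x k)^2 := by
      simp only [dotProduct, star_trivial]
      rw [← Finset.sum_mul]; ring
    rw [this]
    positivity

lemma lap_K (hn : 0 < n) {L : Matrix (Fin n) (Fin n) ℝ} (hL : IsConnLaplacian L) :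
    (L + (n:ℝ)⁻¹ • Jm n).det = Real.exp (pld L) ∧ (L + (n:ℝ)⁻¹ • Jm n).PosSemidef := by
  have hnR : (n:ℝ) ≠ 0 := Nat.cast_ne_zero.mpr hn.ne'
  have hpsd := lap_psd hL
  have hherm := hpsd.1
  set μ := hherm.eigenvalues with hμdef
  set b := hherm.eigenvectorBasis with hbdef
  have heig0 : ∀ i, L *ᵥ ⇑(b i) = μ i • ⇑(b i) := fun i => hherm.mulVec_eigenvectorBasis i
  have heig : ∀ i, (L *ᵥ fun j => b i j) = fun j => μ i * b i j := fun i => heig0 i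
  have hμ0 : ∀ i, 0 ≤ μ i := hpsd.eigenvalues_nonneg
  obtain ⟨hdet, -, hchar⟩ := eigen_facts L b μ heig0
  have hinner : ∀ i k, (∑ j, b i j * b k j) = if i = k then (1:ℝ) else 0 := by
    intro i k
    have := orthonormal_iff_ite.mp b.orthonormal i k
    simp only [PiLp.inner_apply, RCLike.inner_apply, conj_trivial] at this
    rw [← this]; exact Finset.sum_congr rfl fun _ _ => mul_comm _ _
  have hdet0 : L.det = 0 := by
    rw [← Matrix.exists_mulVec_eq_zero_iff]
    refine ⟨fun _ => 1, ?_, lap_mulVec_one hL.2.2.1⟩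
    intro h
    exact one_ne_zero (congrFun h ⟨0, hn⟩)
  obtain ⟨i₀, -, hμi₀⟩ := Finset.prod_eq_zero_iff.mp (hdet.symm.trans hdet0)
  have hker : ∀ i, μ i = 0 → ∃ c : ℝ, (fun j => b i j) = fun _ => c := by
    intro i hi
    refine (hL.2.2.2 _).mp ?_
    rw [heig i, hi]
    funext j; simp
  obtain ⟨c₀, hc₀⟩ := hker i₀ hμi₀
  have hbc₀ : ∀ j, b i₀ j = c₀ := fun j => congrFun hc₀ j
  have hnc₀ : (n:ℝ) * c₀^2 = 1 := by
    have h1 := hinner i₀ i₀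
    rw [if_pos rfl] at h1
    simp only [hbc₀] at h1
    rw [Finset.sum_const, Finset.card_univ, Fintype.card_fin, nsmul_eq_mul] at h1
    rw [← h1]; ring
  have hc₀ne : c₀ ≠ 0 := by
    intro h; rw [h] at hnc₀; simp at hnc₀
  have hsum0 : ∀ i, i ≠ i₀ → ∑ j, b i j = 0 := by
    intro i hi
    have h1 := hinner i₀ i
    rw [if_neg (Ne.symm hi)] at h1
    simp only [hbc₀] at h1
    rw [← Finset.mul_sum] at h1
    exact (mul_eq_zero.mp h1).resolve_left hc₀ne
  have hpos : ∀ i, i ≠ i₀ → 0 < μ i := by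
    intro i hi
    rcases (hμ0 i).lt_or_eq with h | h
    · exact h
    exfalso
    obtain ⟨c, hc⟩ := hker i h.symm
    have hcval : ∀ j, b i j = c := fun j => congrFun hc j
    have hsum := hsum0 i hi
    simp only [hcval, Finset.sum_const, Finset.card_univ, Fintype.card_fin,
      nsmul_eq_mul] at hsum
    have hc0 : c = 0 := (mul_eq_zero.mp hsum).resolve_left hnR
    have h1 := hinner i i
    rw [if_pos rfl] at h1
    simp only [hcval, hc0] at h1
    simp at h1
  set ν : Fin n → ℝ := fun i => if i = i₀ then 1 else μ i with hνdef
  have hν₀ : ν i₀ = 1 := by rw [hνdef]; simp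
  have hνne : ∀ i, i ≠ i₀ → ν i = μ i := by
    intro i hi; rw [hνdef]; simp [hi]
  have heigK' : ∀ i, (L + (n:ℝ)⁻¹ • Jm n) *ᵥ (fun j => b i j) = fun j => ν i * b i j := by
    intro i
    funext j
    rw [Matrix.add_mulVec, Matrix.smul_mulVec, Jm_mulVec]
    simp only [Pi.add_apply, Pi.smul_apply, smul_eq_mul]
    rw [congrFun (heig i) j]
    by_cases hi : i = i₀
    · subst hi
      rw [hμi₀, hν₀]
      simp only [hbc₀, Finset.sum_const, Finset.card_univ, Fintype.card_fin, nsmul_eq_mul]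
      field_simp
      ring
    · rw [hsum0 i hi, hνne i hi, mul_zero, add_zero]
  have heigK : ∀ i, (L + (n:ℝ)⁻¹ • Jm n) *ᵥ ⇑(b i) = ν i • ⇑(b i) := fun i => heigK' i
  obtain ⟨hdetK, -, -⟩ := eigen_facts _ b ν heigK
  refine ⟨?_, (lap_psd hL).add (Jm_smul_psd n)⟩
  rw [hdetK]
  have hfilter : Finset.univ.filter (fun i => 0 < μ i) = Finset.univ.erase i₀ := by
    ext i
    simp only [Finset.mem_filter, Finset.mem_univ, true_and, Finset.mem_erase, and_true]
    constructor
    · intro h hI; rw [hI, hμi₀] at h; exact lt_irrefl 0 h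
    · exact hpos i
  rw [pld_of_charpoly L μ hchar, hfilter, Real.exp_sum]
  rw [← Finset.prod_erase_mul _ _ (Finset.mem_univ i₀)]
  rw [hν₀, mul_one]
  refine Finset.prod_congr rfl fun i hi => ?_
  have hi' : i ≠ i₀ := (Finset.mem_erase.mp hi).1
  rw [hνne i hi', Real.exp_log (hpos i hi')]


lemma one_add_sum_le_prod {ι : Type*} (s : Finset ι) (f : ι → ℝ)
    (hf : ∀ i ∈ s, 1 ≤ f i) :
    1 + ∑ i ∈ s, (f i - 1) ≤ ∏ i ∈ s, f i := by
  induction s using Finset.cons_induction with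
  | empty => simp
  | cons a s ha ih =>
    rw [Finset.prod_cons, Finset.sum_cons]
    have h1 : 1 ≤ f a := hf a (Finset.mem_cons_self a s)
    have h2 : 1 + ∑ i ∈ s, (f i - 1) ≤ ∏ i ∈ s, f i :=
      ih fun i hi => hf i (Finset.mem_cons_of_mem hi)
    have h3 : 0 ≤ ∑ i ∈ s, (f i - 1) :=
      Finset.sum_nonneg fun i hi => by linarith [hf i (Finset.mem_cons_of_mem hi)]
    nlinarith [mul_le_mul_of_nonneg_left h2 (by linarith : (0:ℝ) ≤ f a)]

lemma sum_log_le {ι : Type*} (s : Finset ι) (f : ι → ℝ) (hs : s.Nonempty)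
    (hf : ∀ i ∈ s, 0 < f i) :
    ∑ i ∈ s, Real.log (f i) ≤ (s.card : ℝ) * Real.log ((∑ i ∈ s, f i) / s.card) := by
  have hcard : (0:ℝ) < s.card := by exact_mod_cast Finset.card_pos.mpr hs
  have key := Real.geom_mean_le_arith_mean s (fun _ => 1) f (fun _ _ => zero_le_one)
    (by rw [Finset.sum_const, nsmul_eq_mul, mul_one]; exact hcard)
    (fun i hi => (hf i hi).le)
  simp only [Real.rpow_one, Finset.sum_const, nsmul_eq_mul, mul_one, one_mul] at key
  have hprod : 0 < ∏ i ∈ s, f i := Finset.prod_pos hf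
  have hlog := Real.log_le_log (Real.rpow_pos_of_pos hprod _) key
  rw [Real.log_rpow hprod] at hlog
  have h2 := mul_le_mul_of_nonneg_left hlog hcard.le
  rw [← mul_assoc, mul_inv_cancel₀ hcard.ne', one_mul] at h2
  rw [Real.log_prod (fun i hi => (hf i hi).ne')] at h2
  exact h2


end StretchAux

open StretchAux

/-- stretch bounds on the pseudo-log-determinant. If `L_H ⪯ L_G` and
`σ = st_H(G) = Tr(L_H⁺ L_G)`, then
`ld(L_H) + log(σ - n + 2) ≤ ld(L_G) ≤ ld(L_H) + (n-1) log(σ/(n-1))`,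
with equalities when `H = G`. -/
theorem stretch_pld_bounds
    {n : ℕ} (hn : 2 ≤ n) (LG LH PH : Matrix (Fin n) (Fin n) ℝ)
    (hG : IsConnLaplacian LG) (hH : IsConnLaplacian LH)
    (hPH : IsMoorePenrose LH PH)
    (hle : (LG - LH).PosSemidef) :
    (pld LH + Real.log ((PH * LG).trace - n + 2) ≤ pld LG ∧
      pld LG ≤ pld LH + ((n : ℝ) - 1) * Real.log ((PH * LG).trace / ((n : ℝ) - 1))) ∧
    (LH = LG →
      (pld LH + Real.log ((PH * LG).trace - n + 2) = pld LG ∧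
        pld LG = pld LH + ((n : ℝ) - 1) * Real.log ((PH * LG).trace / ((n : ℝ) - 1)))) := by
  have hn0 : 0 < n := lt_of_lt_of_le two_pos hn
  have hnR : (0:ℝ) < n := by exact_mod_cast hn0
  have hn1 : (0:ℝ) < (n:ℝ) - 1 := by
    have : (2:ℝ) ≤ n := by exact_mod_cast hn
    linarith
  have hJtrace : (Jm n).trace = (n:ℝ) := by
    simp [Matrix.trace, Matrix.diag, Jm]
  set σ := (PH * LG).trace with hσ
  set A := LH + (n:ℝ)⁻¹ • Jm n with hA
  set Bm := LG + (n:ℝ)⁻¹ • Jm n with hB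
  obtain ⟨hdetA, hApsd⟩ := lap_K hn0 hH
  obtain ⟨hdetB, hBpsd⟩ := lap_K hn0 hG
  rw [← hA] at hdetA hApsd
  rw [← hB] at hdetB hBpsd
  have hdetA_pos : 0 < A.det := hdetA ▸ Real.exp_pos _
  -- inverse of A
  have hA_inv : A⁻¹ = PH + (n:ℝ)⁻¹ • Jm n := by
    apply Matrix.inv_eq_right_inv
    rw [hA, Matrix.add_mul, Matrix.mul_add, Matrix.mul_add]
    rw [Matrix.mul_smul, mul_Jm_eq_zero hH.2.2.1, Matrix.smul_mul, Jm_mul_pinv hH hPH,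
      Matrix.mul_smul, Matrix.smul_mul, Jm_mul_Jm, lap_mul_pinv hn0 hH hPH]
    rw [smul_smul, smul_smul]
    have hc : (n:ℝ)⁻¹ * (n:ℝ)⁻¹ * (n:ℝ) = (n:ℝ)⁻¹ := by field_simp
    rw [hc]
    simp only [smul_zero, add_zero, zero_add]
    abel
  -- square root
  set S := (open scoped MatrixOrder in CFC.sqrt A) with hSdef
  have hSS : S * S = A := by open scoped MatrixOrder in exact CFC.sqrt_mul_sqrt_self A hApsd.nonneg
  have hSsymm : Sᵀ = S := by
    have h2 : Sᴴ = S := by open scoped MatrixOrder in exact (CFC.sqrt_nonneg A).posSemidef.1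
    rwa [conjTranspose_eq_transpose_of_trivial] at h2
  have hdetS : S.det * S.det = A.det := by rw [← Matrix.det_mul, hSS]
  have hdetS_ne : S.det ≠ 0 := by
    intro h; rw [h, mul_zero] at hdetS; exact hdetA_pos.ne (hdetS)
  have hSunit : IsUnit S.det := isUnit_iff_ne_zero.mpr hdetS_ne
  have hSiS : S⁻¹ * S = 1 := Matrix.nonsing_inv_mul S hSunit
  have hSSi : S * S⁻¹ = 1 := Matrix.mul_nonsing_inv S hSunit
  have hSit : (S⁻¹)ᵀ = S⁻¹ := by rw [Matrix.transpose_nonsing_inv, hSsymm]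
  have hBt : Bmᵀ = Bm := by
    have h2 : Bmᴴ = Bm := hBpsd.1
    rwa [conjTranspose_eq_transpose_of_trivial] at h2
  set Cm := S⁻¹ * Bm * S⁻¹ with hCm
  have hCherm : Cm.IsHermitian := by
    show Cmᴴ = Cm
    rw [conjTranspose_eq_transpose_of_trivial, hCm, Matrix.transpose_mul,
      Matrix.transpose_mul, hSit, hBt, Matrix.mul_assoc]
  have hAinv2 : A⁻¹ = S⁻¹ * S⁻¹ := by rw [← hSS, Matrix.mul_inv_rev]
  -- trace of C
  have htrace : Cm.trace = σ + 1 := by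
    have h1 : Cm.trace = (A⁻¹ * Bm).trace := by
      rw [hCm, Matrix.trace_mul_comm, ← Matrix.mul_assoc, ← hAinv2]
    rw [h1, hA_inv, hB, Matrix.add_mul, Matrix.mul_add, Matrix.mul_add]
    rw [Matrix.mul_smul, pinv_mul_Jm hH hPH, Matrix.smul_mul, Jm_mul_eq_zero hG.1 hG.2.2.1,
      Matrix.mul_smul, Matrix.smul_mul, Jm_mul_Jm, smul_smul, smul_smul]
    simp only [smul_zero, add_zero, zero_add]
    rw [Matrix.trace_add, Matrix.trace_smul, hJtrace, ← hσ, smul_eq_mul]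
    have hc : (n:ℝ)⁻¹ * (n:ℝ)⁻¹ * (n:ℝ) * (n:ℝ) = 1 := by field_simp
    linarith
  -- determinant of C
  have hdetC : Cm.det = Real.exp (pld LG - pld LH) := by
    rw [hCm, Matrix.det_mul, Matrix.det_mul, Matrix.det_nonsing_inv, Ring.inverse_eq_inv]
    have h1 : (S.det)⁻¹ * Bm.det * (S.det)⁻¹ = Bm.det / (S.det * S.det) := by
      field_simp
    rw [h1, hdetS, hdetA, hdetB, ← Real.exp_sub]
  -- eigenvalues of C
  set μ' := hCherm.eigenvalues with hμ'def
  set b' := hCherm.eigenvectorBasis with hb'def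
  have heigC : ∀ i, Cm *ᵥ ⇑(b' i) = μ' i • ⇑(b' i) := fun i => hCherm.mulVec_eigenvectorBasis i
  obtain ⟨hdetC', htraceC', -⟩ := eigen_facts Cm b' μ' heigC
  have heigC1 : ∀ i, (Cm - 1) *ᵥ ⇑(b' i) = (μ' i - 1) • ⇑(b' i) := by
    intro i
    rw [Matrix.sub_mulVec, heigC i, Matrix.one_mulVec, sub_smul, one_smul]
  obtain ⟨hdetC1, -, -⟩ := eigen_facts _ b' (fun i => μ' i - 1) heigC1
  -- C - 1 = S⁻¹ (LG - LH) S⁻¹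
  have hSAS : S⁻¹ * A * S⁻¹ = 1 := by
    rw [← hSS, ← Matrix.mul_assoc, hSiS, Matrix.one_mul, hSSi]

  have hCsub : Cm - 1 = S⁻¹ * (LG - LH) * S⁻¹ := by
    have hBA : LG - LH = Bm - A := by rw [hA, hB]; abel
    rw [hBA, Matrix.mul_sub, Matrix.sub_mul, hSAS, hCm]
  have hdet_diff0 : (LG - LH).det = 0 := by
    rw [← Matrix.exists_mulVec_eq_zero_iff]
    refine ⟨fun _ => 1, fun h => one_ne_zero (congrFun h ⟨0, hn0⟩), ?_⟩
    rw [Matrix.sub_mulVec, lap_mulVec_one hG.2.2.1, lap_mulVec_one hH.2.2.1, sub_zero]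
  have hprod1 : ∏ i, (μ' i - 1) = 0 := by
    rw [← hdetC1, hCsub, Matrix.det_mul, Matrix.det_mul, hdet_diff0, mul_zero, zero_mul]
  obtain ⟨i₁, -, hμ'i₁'⟩ := Finset.prod_eq_zero_iff.mp hprod1
  have hμ'i₁ : μ' i₁ = 1 := by linarith [sub_eq_zero.mp hμ'i₁']
  -- μ' ≥ 1
  have hC1psd : (Cm - 1).PosSemidef := by
    rw [hCsub]
    have := hle.mul_mul_conjTranspose_same S⁻¹
    rwa [conjTranspose_eq_transpose_of_trivial, hSit] at this
  have hinner' : ∀ i, (∑ j, b' i j * b' i j) = 1 := by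
    intro i
    have := orthonormal_iff_ite.mp b'.orthonormal i i
    simp only [PiLp.inner_apply, RCLike.inner_apply, conj_trivial, if_pos rfl] at this
    exact this
  have hge1 : ∀ i, 1 ≤ μ' i := by
    intro i
    have heigC1' : ((Cm - 1) *ᵥ fun j => b' i j) = fun j => (μ' i - 1) * b' i j := heigC1 i
    have hq : (0:ℝ) ≤ ∑ j, b' i j * ((μ' i - 1) * b' i j) := by
      have h0 := hC1psd.dotProduct_mulVec_nonneg (fun j => b' i j)
      rw [heigC1'] at h0
      simpa [dotProduct] using h0
    have h2 : ∑ j, b' i j * ((μ' i - 1) * b' i j) = (μ' i - 1) * ∑ j, b' i j * b' i j := by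
      rw [Finset.mul_sum]
      exact Finset.sum_congr rfl fun j _ => by ring
    rw [h2, hinner' i, mul_one] at hq
    linarith
  have hsum : ∑ i, μ' i = σ + 1 := by rw [← htraceC', htrace]
  have hprodμ : ∏ i, μ' i = Real.exp (pld LG - pld LH) := by rw [← hdetC', hdetC]
  have hτn : (n:ℝ) ≤ σ + 1 := by
    have h1 : ∑ _i : Fin n, (1:ℝ) ≤ ∑ i, μ' i := Finset.sum_le_sum fun i _ => hge1 i
    rw [hsum] at h1
    simpa using h1
  -- lower bound
  have hlow : Real.log (σ - n + 2) ≤ pld LG - pld LH := by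
    have h1 : 1 + ∑ i, (μ' i - 1) ≤ ∏ i, μ' i :=
      one_add_sum_le_prod _ _ fun i _ => hge1 i
    have h2 : ∑ i, (μ' i - 1) = σ + 1 - n := by
      rw [Finset.sum_sub_distrib, hsum]
      simp
    have h3 : σ - n + 2 ≤ Real.exp (pld LG - pld LH) := by
      rw [← hprodμ]; linarith
    have h4 : (0:ℝ) < σ - n + 2 := by linarith
    calc Real.log (σ - n + 2) ≤ Real.log (Real.exp (pld LG - pld LH)) :=
        Real.log_le_log h4 h3
    _ = pld LG - pld LH := Real.log_exp _
  -- upper bound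
  have hup : pld LG - pld LH ≤ ((n:ℝ) - 1) * Real.log (σ / ((n:ℝ) - 1)) := by
    have hD : pld LG - pld LH = Real.log (∏ i, μ' i) := by rw [hprodμ, Real.log_exp]
    have hsplit : ∏ i, μ' i = ∏ i ∈ Finset.univ.erase i₁, μ' i := by
      rw [← Finset.prod_erase_mul _ _ (Finset.mem_univ i₁), hμ'i₁, mul_one]
    have hcard : (Finset.univ.erase i₁).card = n - 1 := by
      rw [Finset.card_erase_of_mem (Finset.mem_univ i₁), Finset.card_univ, Fintype.card_fin]
    have hcardR : ((Finset.univ.erase i₁).card : ℝ) = (n:ℝ) - 1 := by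
      rw [hcard]
      have h1 : 1 ≤ n := hn0
      push_cast [Nat.cast_sub h1]
      ring
    have hsum' : ∑ i ∈ Finset.univ.erase i₁, μ' i = σ := by
      have h5 := Finset.sum_erase_add Finset.univ μ' (Finset.mem_univ i₁)
      rw [hμ'i₁, hsum] at h5
      linarith
    have hne : (Finset.univ.erase i₁).Nonempty := by
      rw [← Finset.card_pos, hcard]
      omega
    have hkey := sum_log_le _ μ' hne fun i _ => lt_of_lt_of_le one_pos (hge1 i)
    rw [hsum', hcardR] at hkey
    rw [hD, hsplit, Real.log_prod fun i _ => (lt_of_lt_of_le one_pos (hge1 i)).ne']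
    exact hkey
  refine ⟨⟨by linarith, by linarith⟩, ?_⟩
  intro hEq
  have hσval : σ = (n:ℝ) - 1 := by
    rw [hσ, ← hEq, Matrix.trace_mul_comm, lap_mul_pinv hn0 hH hPH, Matrix.trace_sub,
      Matrix.trace_one, Matrix.trace_smul, hJtrace, smul_eq_mul]
    rw [Fintype.card_fin]
    field_simp
  have hpld_eq : pld LH = pld LG := by rw [hEq]
  constructor
  · have h1 : σ - n + 2 = 1 := by rw [hσval]; ring
    rw [h1, Real.log_one, add_zero, hpld_eq]
  · rw [hσval, div_self hn1.ne', Real.log_one, mul_zero, add_zero, hpld_eq]
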